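/- Let (𝒳, 𝒜, P) be a measure space with P a probability measure, let ι be an index type, and let θ_i : 𝒳 → ℝ (i ∈ ι) be measurable functions with sup_{i∈ι} sup_{x∈𝒳} |θ_i(x)| ≤ θ̄ < ∞. Fix r ∈ [1,∞] and suppose θ̄_r := sup_{i∈ι} ‖θ_i‖_{L^r(P)} < ∞. Let w : ι → ℝ satisfy w̲ := inf_{i∈ι} w_i > 0. Suppose g₀(x) = ∑_{i∈ι} b_i θ_i(x) pointwise for coefficients b : ι → ℝ such that the family (w_i|b_i|)_{i∈ι} is summable with ∑_{i∈ι} w_i|b_i| ≤ B₀ < ∞. Then for every B > 0 there exist coefficients b' : ι → ℝ with (w_i|b'_i|)_{i∈ι} summable, ∑_{i∈ι} w_i|b'_i| ≤ B, and ‖g₀ − ∑_{i∈ι} b'_i θ_i‖_{L^r(P)} ≤ w̲^{-1} θ̄_r · max{B₀ − B, 0}. -/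

import Mathlib

open MeasureTheory
open scoped ENNReal

/-- Partial sums over a monotone sequence of finsets whose union covers the support
converge to the sum. -/
lemma tendsto_finsetSum_of_support_subset {ι : Type*} {f : ι → ℝ} {a : ℝ}
    (hf : HasSum f a) (s : ℕ → Finset ι) (hmono : Monotone s)
    (hsupp : Function.support f ⊆ ⋃ n, (s n : Set ι)) :
    Filter.Tendsto (fun n => ∑ i ∈ s n, f i) Filter.atTop (nhds a) := by
  classical
  intro U hU
  have h1 : (fun t : Finset ι => ∑ i ∈ t, f i) ⁻¹' U ∈ Filter.atTop := hf hU
  obtain ⟨t₀, ht₀⟩ := Filter.mem_atTop_sets.mp h1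
  set t₁ : Finset ι := t₀.filter (fun i => f i ≠ 0) with ht₁
  have hex : ∀ i ∈ t₁, ∃ n, i ∈ s n := by
    intro i hi
    have : i ∈ Function.support f := by
      simpa using (Finset.mem_filter.mp hi).2
    simpa using hsupp this
  choose! n hn using hex
  refine Filter.mem_atTop_sets.mpr ⟨t₁.sup n, fun m hm => ?_⟩
  have hsub : t₁ ⊆ s m := fun i hi =>
    hmono (le_trans (Finset.le_sup hi) hm) (hn i hi)
  have key : ∑ i ∈ s m, f i = ∑ i ∈ s m ∪ t₀, f i := by
    refine Finset.sum_subset Finset.subset_union_left ?_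
    intro x hx hxs
    by_contra hfx
    have hxt₀ : x ∈ t₀ := by
      rcases Finset.mem_union.mp hx with h | h
      · exact absurd h hxs
      · exact h
    have : x ∈ t₁ := Finset.mem_filter.mpr ⟨hxt₀, hfx⟩
    exact hxs (hsub this)
  have : s m ∪ t₀ ∈ (fun t : Finset ι => ∑ i ∈ t, f i) ⁻¹' U :=
    ht₀ _ (Finset.subset_union_right)
  simpa [Set.mem_preimage, key] using this

/-- Key estimate: the `L^r` norm of a pointwise absolutely convergent series
`∑ᵢ cᵢ θᵢ` is at most `(∑ᵢ |cᵢ|) θ̄ᵣ`. -/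
lemma eLpNorm_tsum_mul_le {𝒳 : Type*} [MeasurableSpace 𝒳] (P : Measure 𝒳)
    {ι : Type*} (θ : ι → 𝒳 → ℝ) (hθmeas : ∀ i, Measurable (θ i))
    (θbar : ℝ) (hθbd : ∀ i x, |θ i x| ≤ θbar)
    (r : ℝ≥0∞) (hr : 1 ≤ r) (θbarr : ℝ≥0∞)
    (hθr : ∀ i, eLpNorm (θ i) r P ≤ θbarr)
    (c : ι → ℝ) (hc : Summable (fun i => |c i|)) (hθbar : 0 ≤ θbar) :
    eLpNorm (fun x => ∑' i, c i * θ i x) r P ≤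
      ENNReal.ofReal (∑' i, |c i|) * θbarr := by
  classical
  by_cases hzero : ∀ i, c i = 0
  · have : (fun x => ∑' i, c i * θ i x) = (fun _ => (0 : ℝ)) := by
      funext x; simp [hzero]
    rw [this]
    simpa using (zero_le _)
  push_neg at hzero
  obtain ⟨i₀, hi₀⟩ := hzero
  -- countable support
  have hTc : (Function.support c).Countable := by
    have := hc.countable_support
    refine this.mono ?_
    intro i hi
    simp only [Function.mem_support] at hi ⊢
    simpa [abs_eq_zero] using hi
  have hTne : (Function.support c).Nonempty := ⟨i₀, hi₀⟩
  obtain ⟨e, he⟩ := hTc.exists_eq_range hTne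
  set s : ℕ → Finset ι := fun n => (Finset.range n).image e with hs
  have hmono : Monotone s := by
    intro m n hmn
    exact Finset.image_subset_image (Finset.range_subset_range.mpr hmn)
  -- pointwise summability
  have hsumm : ∀ x, Summable (fun i => c i * θ i x) := by
    intro x
    refine Summable.of_norm ?_
    refine Summable.of_nonneg_of_le (fun i => norm_nonneg _) (fun i => ?_)
      (hc.mul_right θbar)
    rw [norm_mul, Real.norm_eq_abs, Real.norm_eq_abs]
    exact mul_le_mul_of_nonneg_left (hθbd i x) (abs_nonneg _)
  -- pointwise convergence of partial sums
  have hlim : ∀ x, Filter.Tendsto (fun n => ∑ i ∈ s n, c i * θ i x)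
      Filter.atTop (nhds (∑' i, c i * θ i x)) := by
    intro x
    refine tendsto_finsetSum_of_support_subset (hsumm x).hasSum s hmono ?_
    intro i hi
    have : i ∈ Function.support c := by
      simp only [Function.mem_support] at hi ⊢
      intro h; exact hi (by simp [h])
    rw [he] at this
    obtain ⟨k, hk⟩ := this
    refine Set.mem_iUnion.mpr ⟨k + 1, ?_⟩
    simp only [hs, Finset.coe_image, Set.mem_image, Finset.mem_coe, Finset.mem_range]
    exact ⟨k, Nat.lt_succ_self k, hk⟩
  -- each partial sum has controlled norm
  have hFbd : ∀ n, eLpNorm (fun x => ∑ i ∈ s n, c i * θ i x) r P ≤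
      ENNReal.ofReal (∑' i, |c i|) * θbarr := by
    intro n
    have h1 : eLpNorm (∑ i ∈ s n, fun x => c i * θ i x) r P ≤
        ∑ i ∈ s n, eLpNorm (fun x => c i * θ i x) r P :=
      eLpNorm_sum_le (fun i _ => ((hθmeas i).const_mul (c i)).aestronglyMeasurable) hr
    have heq : (fun x => ∑ i ∈ s n, c i * θ i x) =
        (∑ i ∈ s n, fun x => c i * θ i x) := by
      funext x; simp
    rw [heq]
    refine h1.trans ?_
    have h2 : ∀ i, eLpNorm (fun x => c i * θ i x) r P ≤
        ENNReal.ofReal (|c i|) * θbarr := by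
      intro i
      have : (fun x => c i * θ i x) = (c i) • (θ i) := by
        funext x; simp [smul_eq_mul]
      rw [this, eLpNorm_const_smul]
      have : ‖c i‖ₑ = ENNReal.ofReal (|c i|) := by
        rw [← Real.norm_eq_abs, ofReal_norm]
      rw [this]
      exact mul_le_mul_of_nonneg_left (hθr i) zero_le
    calc ∑ i ∈ s n, eLpNorm (fun x => c i * θ i x) r P
        ≤ ∑ i ∈ s n, ENNReal.ofReal (|c i|) * θbarr :=
          Finset.sum_le_sum (fun i _ => h2 i)
      _ = (∑ i ∈ s n, ENNReal.ofReal (|c i|)) * θbarr := by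
          rw [Finset.sum_mul]
      _ ≤ ENNReal.ofReal (∑' i, |c i|) * θbarr := by
          refine mul_le_mul_of_nonneg_right ?_ zero_le
          rw [← ENNReal.ofReal_sum_of_nonneg (fun i _ => abs_nonneg _)]
          exact ENNReal.ofReal_le_ofReal (Summable.sum_le_tsum _ (fun i _ => abs_nonneg _) hc)
  -- lower semicontinuity
  have := MeasureTheory.Lp.eLpNorm_lim_le_liminf_eLpNorm
    (μ := P) (p := r) (f := fun n => fun x => ∑ i ∈ s n, c i * θ i x)
    (fun n => (Finset.measurable_sum (s n)
      (fun i _ => (hθmeas i).const_mul (c i))).aestronglyMeasurable)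
    (fun x => ∑' i, c i * θ i x)
    (Filter.Eventually.of_forall hlim)
  refine this.trans ?_
  calc Filter.atTop.liminf (fun n => eLpNorm (fun x => ∑ i ∈ s n, c i * θ i x) r P)
      ≤ Filter.atTop.liminf (fun _ => ENNReal.ofReal (∑' i, |c i|) * θbarr) :=
        Filter.liminf_le_liminf (Filter.Eventually.of_forall hFbd)
    _ = ENNReal.ofReal (∑' i, |c i|) * θbarr := Filter.liminf_const _

/-- Lemma 1 of the paper: if `g₀ = ∑ᵢ bᵢ θᵢ ∈ ℒ(B₀)` (pointwise), where the `θᵢ` are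
measurable, uniformly bounded by `θ̄`, with `‖θᵢ‖_{L^r(P)} ≤ θ̄ᵣ` and weights
`wᵢ ≥ w̲ > 0` (with `w̲` the infimum of the weights), then for any `B > 0` there are
coefficients `b'` with `∑ᵢ wᵢ |b'ᵢ| ≤ B` whose associated function `g' = ∑ᵢ b'ᵢ θᵢ`
satisfies `‖g₀ - g'‖_{L^r(P)} ≤ w̲⁻¹ θ̄ᵣ max (B₀ - B) 0`. -/
theorem stmt_0 {𝒳 : Type*} [MeasurableSpace 𝒳] (P : Measure 𝒳) [IsProbabilityMeasure P]
    {ι : Type*} (θ : ι → 𝒳 → ℝ) (θbar : ℝ) (hθmeas : ∀ i, Measurable (θ i))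
    (hθbd : ∀ i x, |θ i x| ≤ θbar)
    (r : ℝ≥0∞) (hr : 1 ≤ r) (θbarr : ℝ≥0∞) (hθbarr : θbarr < ∞)
    (hθr : ∀ i, eLpNorm (θ i) r P ≤ θbarr)
    (w : ι → ℝ) (wlow : ℝ) (hwlow : IsGLB (Set.range w) wlow) (hwpos : 0 < wlow)
    (g₀ : 𝒳 → ℝ) (b : ι → ℝ) (hbsum : Summable (fun i => w i * |b i|))
    (B₀ : ℝ) (hB₀ : ∑' i, w i * |b i| ≤ B₀)
    (hg₀ : ∀ x, g₀ x = ∑' i, b i * θ i x) :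
    ∀ B : ℝ, 0 < B →
      ∃ b' : ι → ℝ, Summable (fun i => w i * |b' i|) ∧ (∑' i, w i * |b' i|) ≤ B ∧
        eLpNorm (fun x => g₀ x - ∑' i, b' i * θ i x) r P ≤
          ENNReal.ofReal (wlow⁻¹ * max (B₀ - B) 0) * θbarr := by
  intro B hB
  -- nonemptiness of 𝒳
  have hXne : Nonempty 𝒳 := by
    by_contra h
    rw [not_nonempty_iff] at h
    have h1 : P Set.univ = 1 := measure_univ
    have h2 : (Set.univ : Set 𝒳) = ∅ := Set.univ_eq_empty_iff.mpr h
    rw [h2, measure_empty] at h1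
    exact zero_ne_one h1
  obtain ⟨x₀⟩ := hXne
  -- basic facts about weights
  have hw : ∀ i, wlow ≤ w i := fun i => hwlow.1 ⟨i, rfl⟩
  have hterm_nonneg : ∀ i, 0 ≤ w i * |b i| := fun i =>
    mul_nonneg (le_trans hwpos.le (hw i)) (abs_nonneg _)
  have hB₀nn : 0 ≤ B₀ := le_trans (tsum_nonneg hterm_nonneg) hB₀
  -- case ι empty
  by_cases hι : IsEmpty ι
  · have hz : ∀ (f : ι → ℝ), ∑' i, f i = 0 := fun f => tsum_empty
    refine ⟨b, hbsum, ?_, ?_⟩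
    · rw [hz]; exact hB.le
    · have : (fun x => g₀ x - ∑' i, b i * θ i x) = (fun _ => (0:ℝ)) := by
        funext x; rw [hg₀ x, hz]; ring
      rw [this]
      simpa using (zero_le _)
  rw [not_isEmpty_iff] at hι
  obtain ⟨j₀⟩ := hι
  have hθbar : 0 ≤ θbar := le_trans (abs_nonneg _) (hθbd j₀ x₀)
  -- summability of |b|
  have hinv : ∀ i, |b i| ≤ wlow⁻¹ * (w i * |b i|) := by
    intro i
    have h1 : wlow * |b i| ≤ w i * |b i| :=
      mul_le_mul_of_nonneg_right (hw i) (abs_nonneg _)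
    calc |b i| = wlow⁻¹ * (wlow * |b i|) := by field_simp
      _ ≤ wlow⁻¹ * (w i * |b i|) :=
          mul_le_mul_of_nonneg_left h1 (inv_nonneg.mpr hwpos.le)
  have habs : Summable (fun i => |b i|) :=
    Summable.of_nonneg_of_le (fun i => abs_nonneg _) hinv (hbsum.mul_left wlow⁻¹)
  have hS : (∑' i, |b i|) ≤ wlow⁻¹ * B₀ := by
    calc (∑' i, |b i|) ≤ ∑' i, wlow⁻¹ * (w i * |b i|) :=
          Summable.tsum_le_tsum hinv habs (hbsum.mul_left wlow⁻¹)
      _ = wlow⁻¹ * ∑' i, w i * |b i| := tsum_mul_left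
      _ ≤ wlow⁻¹ * B₀ := mul_le_mul_of_nonneg_left hB₀ (inv_nonneg.mpr hwpos.le)
  -- define the scaling factor
  set t : ℝ := if B₀ ≤ B then 1 else B / B₀ with ht
  have hB₀pos : ¬ B₀ ≤ B → 0 < B₀ := fun h => lt_trans hB (lt_of_not_ge h)
  have ht0 : 0 ≤ t := by
    rw [ht]; split_ifs with h
    · norm_num
    · exact le_of_lt (div_pos hB (hB₀pos h))
  have ht1 : t ≤ 1 := by
    rw [ht]; split_ifs with h
    · exact le_refl 1
    · exact le_of_lt ((div_lt_one (hB₀pos h)).mpr (lt_of_not_ge h))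
  refine ⟨fun i => t * b i, ?_, ?_, ?_⟩
  · -- summability
    have : (fun i => w i * |t * b i|) = (fun i => t * (w i * |b i|)) := by
      funext i; rw [abs_mul, abs_of_nonneg ht0]; ring
    rw [this]
    exact hbsum.mul_left t
  · -- sum bound
    have heq : (fun i => w i * |t * b i|) = (fun i => t * (w i * |b i|)) := by
      funext i; rw [abs_mul, abs_of_nonneg ht0]; ring
    rw [heq, tsum_mul_left]
    have hts : ∑' i, w i * |b i| ≤ B₀ := hB₀
    rw [ht]; split_ifs with h
    · simpa using le_trans hts h
    · have hpos := hB₀pos h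
      calc B / B₀ * ∑' i, w i * |b i| ≤ B / B₀ * B₀ :=
            mul_le_mul_of_nonneg_left hts (le_of_lt (div_pos hB hpos))
        _ = B := div_mul_cancel₀ B hpos.ne'
  · -- the norm bound
    have hdiff : (fun x => g₀ x - ∑' i, (t * b i) * θ i x) =
        (1 - t) • (fun x => ∑' i, b i * θ i x) := by
      funext x
      have h1 : ∑' i, (t * b i) * θ i x = t * ∑' i, b i * θ i x := by
        rw [← tsum_mul_left]
        congr 1; funext i; ring
      simp only [Pi.smul_apply, smul_eq_mul]
      rw [hg₀ x, h1]; ring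
    rw [hdiff, eLpNorm_const_smul]
    have hkey := eLpNorm_tsum_mul_le P θ hθmeas θbar hθbd r hr θbarr hθr b habs hθbar
    have h1t : ‖(1 - t : ℝ)‖ₑ = ENNReal.ofReal (1 - t) := by
      rw [← ofReal_norm, Real.norm_eq_abs,
        abs_of_nonneg (by linarith : (0:ℝ) ≤ 1 - t)]
    rw [h1t]
    calc ENNReal.ofReal (1 - t) * eLpNorm (fun x => ∑' i, b i * θ i x) r P
        ≤ ENNReal.ofReal (1 - t) * (ENNReal.ofReal (∑' i, |b i|) * θbarr) :=
          mul_le_mul_of_nonneg_left hkey zero_le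
      _ = (ENNReal.ofReal (1 - t) * ENNReal.ofReal (∑' i, |b i|)) * θbarr := by
          rw [mul_assoc]
      _ = ENNReal.ofReal ((1 - t) * ∑' i, |b i|) * θbarr := by
          rw [ENNReal.ofReal_mul (by linarith : (0:ℝ) ≤ 1 - t)]
      _ ≤ ENNReal.ofReal (wlow⁻¹ * max (B₀ - B) 0) * θbarr := by
          refine mul_le_mul_of_nonneg_right (ENNReal.ofReal_le_ofReal ?_) zero_le
          have hSnn : 0 ≤ ∑' i, |b i| := tsum_nonneg (fun i => abs_nonneg _)
          calc (1 - t) * ∑' i, |b i| ≤ (1 - t) * (wlow⁻¹ * B₀) :=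
                mul_le_mul_of_nonneg_left hS (by linarith)
            _ = wlow⁻¹ * ((1 - t) * B₀) := by ring
            _ ≤ wlow⁻¹ * max (B₀ - B) 0 := by
                refine mul_le_mul_of_nonneg_left ?_ (inv_nonneg.mpr hwpos.le)
                rw [ht]; split_ifs with h
                · simp [le_max_iff]
                · have hpos := hB₀pos h
                  have : (1 - B / B₀) * B₀ = B₀ - B := by
                    field_simp
                  rw [this]
                  exact le_max_left _ _
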